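/- Fix ρ > 0, a nonempty closed convex set X ⊆ R^n, a convex continuous f : R^n → R, and an affine map h : R^n → R^m. Define the augmented Lagrangian L_ρ(x, λ) := f(x) + (ρ/2) d²(λ/ρ + h(x), R^m_−) − ‖λ‖²/(2ρ), and the dual function g_ρ(λ) := inf_{x ∈ X} L_ρ(x, λ). If x̃ ∈ X satisfies L_ρ(x̃, λ) ≤ g_ρ(λ) + α for some α ≥ 0, then ‖∇_λ L_ρ(x̃, λ) − ∇_λ g_ρ(λ)‖² ≤ 2α/ρ. -/

import Mathlib

open Finset RealInnerProductSpace

namespace IDGB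

noncomputable def mx (ρ t s : ℝ) : ℝ := max (t + ρ * s) 0
noncomputable def phi (ρ t s : ℝ) : ℝ := (mx ρ t s ^ 2 - t ^ 2) / (2 * ρ)
noncomputable def gr (ρ t s : ℝ) : ℝ := (mx ρ t s - t) / ρ


lemma key_A {ρ : ℝ} (hρ : 0 < ρ) (t t' s : ℝ) :
    mx ρ t' s ^ 2 - t' ^ 2 ≤ mx ρ t s ^ 2 - t ^ 2 + 2 * (mx ρ t s - t) * (t' - t) := by
  unfold mx
  rcases le_or_gt (t + ρ * s) 0 with h | h <;> rcases le_or_gt (t' + ρ * s) 0 with h' | h' <;>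
    [rw [max_eq_right h, max_eq_right h']; rw [max_eq_right h, max_eq_left h'.le];
     rw [max_eq_left h.le, max_eq_right h']; rw [max_eq_left h.le, max_eq_left h'.le]] <;>
    nlinarith [sq_nonneg (t' - t), sq_nonneg (t + ρ * s + (t' - t))]

lemma key_B {ρ : ℝ} (hρ : 0 < ρ) (t t' s : ℝ) :
    mx ρ t s ^ 2 - t ^ 2 + 2 * (mx ρ t s - t) * (t' - t) - (t' - t) ^ 2 ≤ mx ρ t' s ^ 2 - t' ^ 2 := by
  unfold mx
  rcases le_or_gt (t + ρ * s) 0 with h | h <;> rcases le_or_gt (t' + ρ * s) 0 with h' | h' <;>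
    [rw [max_eq_right h, max_eq_right h']; rw [max_eq_right h, max_eq_left h'.le];
     rw [max_eq_left h.le, max_eq_right h']; rw [max_eq_left h.le, max_eq_left h'.le]] <;>
    nlinarith [sq_nonneg (t' - t), sq_nonneg (t' + ρ * s)]

lemma key_Lip {ρ : ℝ} (hρ : 0 < ρ) (t t' s : ℝ) :
    ((mx ρ t' s - t') - (mx ρ t s - t)) ^ 2 ≤ (t' - t) ^ 2 := by
  unfold mx
  rcases le_or_gt (t + ρ * s) 0 with h | h <;> rcases le_or_gt (t' + ρ * s) 0 with h' | h' <;>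
    [rw [max_eq_right h, max_eq_right h']; rw [max_eq_right h, max_eq_left h'.le];
     rw [max_eq_left h.le, max_eq_right h']; rw [max_eq_left h.le, max_eq_left h'.le]] <;>
    nlinarith [sq_nonneg (t' - t)]

lemma mx_ge (ρ t s : ℝ) : t + ρ * s ≤ mx ρ t s := le_max_left _ _

lemma key_star {ρ : ℝ} (hρ : 0 < ρ) (t s μ' : ℝ) (hμ : 0 ≤ μ') :
    2 * ρ * (μ' * s) - (μ' - t) ^ 2 ≤ mx ρ t s ^ 2 - t ^ 2 - (μ' - mx ρ t s) ^ 2 := by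
  nlinarith [mul_le_mul_of_nonneg_left (mx_ge ρ t s) hμ]

lemma key_eq {ρ : ℝ} (hρ : 0 < ρ) (t s : ℝ) :
    2 * ρ * (mx ρ t s * s) - (mx ρ t s - t) ^ 2 = mx ρ t s ^ 2 - t ^ 2 := by
  unfold mx
  rcases le_or_gt (t + ρ * s) 0 with h | h <;>
    [rw [max_eq_right h]; rw [max_eq_left h.le]] <;> ring_nf <;> nlinarith []


variable {ρ : ℝ}

lemma scalar_A (hρ : 0 < ρ) (t t' s : ℝ) :
    phi ρ t' s ≤ phi ρ t s + gr ρ t s * (t' - t) := by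
  have h : phi ρ t s + gr ρ t s * (t' - t)
      = (mx ρ t s ^ 2 - t ^ 2 + 2 * (mx ρ t s - t) * (t' - t)) / (2 * ρ) := by
    unfold phi gr; field_simp
  rw [h, phi]
  exact (div_le_div_iff_of_pos_right (by positivity)).mpr (key_A hρ t t' s)

lemma scalar_B (hρ : 0 < ρ) (t t' s : ℝ) :
    phi ρ t s + gr ρ t s * (t' - t) - (t' - t) ^ 2 / (2 * ρ) ≤ phi ρ t' s := by
  have h : phi ρ t s + gr ρ t s * (t' - t) - (t' - t) ^ 2 / (2 * ρ)
      = (mx ρ t s ^ 2 - t ^ 2 + 2 * (mx ρ t s - t) * (t' - t) - (t' - t) ^ 2) / (2 * ρ) := by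
    unfold phi gr; field_simp
  rw [h, phi]
  exact (div_le_div_iff_of_pos_right (by positivity)).mpr (key_B hρ t t' s)

lemma scalar_Lip (hρ : 0 < ρ) (t t' s : ℝ) :
    (gr ρ t' s - gr ρ t s) ^ 2 ≤ (t' - t) ^ 2 / ρ ^ 2 := by
  have h : (gr ρ t' s - gr ρ t s) ^ 2
      = ((mx ρ t' s - t') - (mx ρ t s - t)) ^ 2 / ρ ^ 2 := by
    unfold gr; field_simp; try ring
  rw [h]
  exact (div_le_div_iff_of_pos_right (by positivity)).mpr (key_Lip hρ t t' s)

lemma scalar_star (hρ : 0 < ρ) (t s μ' : ℝ) (hμ : 0 ≤ μ') :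
    μ' * s - (μ' - t) ^ 2 / (2 * ρ) ≤ phi ρ t s - (μ' - mx ρ t s) ^ 2 / (2 * ρ) := by
  have h1 : μ' * s - (μ' - t) ^ 2 / (2 * ρ)
      = (2 * ρ * (μ' * s) - (μ' - t) ^ 2) / (2 * ρ) := by field_simp
  have h2 : phi ρ t s - (μ' - mx ρ t s) ^ 2 / (2 * ρ)
      = (mx ρ t s ^ 2 - t ^ 2 - (μ' - mx ρ t s) ^ 2) / (2 * ρ) := by
    unfold phi; field_simp
  rw [h1, h2]
  exact (div_le_div_iff_of_pos_right (by positivity)).mpr (key_star hρ t s μ' hμ)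

lemma scalar_eqq (hρ : 0 < ρ) (t s : ℝ) :
    mx ρ t s * s - (mx ρ t s - t) ^ 2 / (2 * ρ) = phi ρ t s := by
  have h1 : mx ρ t s * s - (mx ρ t s - t) ^ 2 / (2 * ρ)
      = (2 * ρ * (mx ρ t s * s) - (mx ρ t s - t) ^ 2) / (2 * ρ) := by field_simp
  rw [h1, key_eq hρ, phi]


variable {m : ℕ}


noncomputable def Phi (ρ : ℝ) (c lam : EuclideanSpace ℝ (Fin m)) : ℝ :=
  ∑ i, phi ρ (lam i) (c i)
noncomputable def Gv (ρ : ℝ) (c lam : EuclideanSpace ℝ (Fin m)) : EuclideanSpace ℝ (Fin m) :=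
  WithLp.toLp 2 (fun i => gr ρ (lam i) (c i))
noncomputable def Mv (ρ : ℝ) (c lam : EuclideanSpace ℝ (Fin m)) : EuclideanSpace ℝ (Fin m) :=
  WithLp.toLp 2 (fun i => mx ρ (lam i) (c i))

lemma inner_eq (x y : EuclideanSpace ℝ (Fin m)) : ⟪x, y⟫ = ∑ i, x i * y i := by
  simp [PiLp.inner_apply, RCLike.inner_apply, conj_trivial]
  exact Finset.sum_congr rfl (fun i _ => mul_comm _ _)

lemma norm_sq_eq (x : EuclideanSpace ℝ (Fin m)) : ‖x‖ ^ 2 = ∑ i, x i ^ 2 := by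
  rw [EuclideanSpace.norm_eq, Real.sq_sqrt (by positivity)]
  simp [Real.norm_eq_abs, sq_abs]

lemma infDist_sq (y : EuclideanSpace ℝ (Fin m)) :
    Metric.infDist y {v : EuclideanSpace ℝ (Fin m) | ∀ i, v i ≤ 0} ^ 2
      = ∑ i, max (y i) 0 ^ 2 := by
  classical
  set K : Set (EuclideanSpace ℝ (Fin m)) := {v | ∀ i, v i ≤ 0} with hK
  set z : EuclideanSpace ℝ (Fin m) := WithLp.toLp 2 (fun i => min (y i) 0) with hz
  have hzK : z ∈ K := fun i => min_le_right _ _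
  have hdz : ∀ w ∈ K, dist y z ≤ dist y w := by
    intro w hw
    rw [EuclideanSpace.dist_eq, EuclideanSpace.dist_eq]
    apply Real.sqrt_le_sqrt
    apply Finset.sum_le_sum
    intro i _
    have hwi : w i ≤ 0 := hw i
    rw [Real.dist_eq, Real.dist_eq, sq_abs, sq_abs]
    rcases le_or_gt (y i) 0 with h | h
    · simp only [hz, PiLp.toLp_apply, min_eq_left h]
      nlinarith
    · simp only [hz, PiLp.toLp_apply, min_eq_right h.le]
      nlinarith
  have h1 : Metric.infDist y K = dist y z := by
    refine le_antisymm (Metric.infDist_le_dist_of_mem hzK) ?_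
    by_contra hlt
    push_neg at hlt
    obtain ⟨w, hwK, hwlt⟩ := (Metric.infDist_lt_iff ⟨z, hzK⟩).1 hlt
    exact absurd (hdz w hwK) (not_le.2 hwlt)
  rw [h1, EuclideanSpace.dist_eq, Real.sq_sqrt (by positivity)]
  apply Finset.sum_congr rfl
  intro i _
  rw [Real.dist_eq, sq_abs]
  have : y i - z i = max (y i) 0 := by
    simp only [hz, PiLp.toLp_apply]
    rcases le_or_gt (y i) 0 with h | h
    · simp [min_eq_left h, max_eq_right h]
    · simp [min_eq_right h.le, max_eq_left h.le]
  rw [this]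

lemma phi_repr {ρ : ℝ} (hρ : 0 < ρ) (c lam : EuclideanSpace ℝ (Fin m)) :
    ρ / 2 * (Metric.infDist (ρ⁻¹ • lam + c)
        {v : EuclideanSpace ℝ (Fin m) | ∀ i, v i ≤ 0}) ^ 2 - ‖lam‖ ^ 2 / (2 * ρ)
      = Phi ρ c lam := by
  rw [infDist_sq, norm_sq_eq, Phi, Finset.mul_sum, Finset.sum_div, ← Finset.sum_sub_distrib]
  apply Finset.sum_congr rfl
  intro i _
  have happ : (ρ⁻¹ • lam + c) i = lam i / ρ + c i := by
    simp [div_eq_inv_mul]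
  rw [happ]
  have hmax : max (lam i / ρ + c i) 0 = mx ρ (lam i) (c i) / ρ := by
    unfold mx
    rcases le_or_gt (lam i + ρ * c i) 0 with h | h
    · rw [max_eq_right h, max_eq_right, zero_div]
      · rw [div_add' _ _ _ (ne_of_gt hρ)]
        exact div_nonpos_of_nonpos_of_nonneg (by linarith) hρ.le
    · rw [max_eq_left h.le, max_eq_left]
      · field_simp
      · rw [div_add' _ _ _ (ne_of_gt hρ)]
        exact div_nonneg (by linarith) hρ.le
  rw [hmax, phi]
  field_simp


lemma vec_A {ρ : ℝ} (hρ : 0 < ρ) (c lam mu : EuclideanSpace ℝ (Fin m)) :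
    Phi ρ c mu ≤ Phi ρ c lam + ⟪Gv ρ c lam, mu - lam⟫ := by
  rw [inner_eq, Phi, Phi, ← Finset.sum_add_distrib]
  apply Finset.sum_le_sum
  intro i _
  have := scalar_A hρ (lam i) (mu i) (c i)
  simpa [Gv] using this

lemma vec_B {ρ : ℝ} (hρ : 0 < ρ) (c lam mu : EuclideanSpace ℝ (Fin m)) :
    Phi ρ c lam + ⟪Gv ρ c lam, mu - lam⟫ - ‖mu - lam‖ ^ 2 / (2 * ρ) ≤ Phi ρ c mu := by
  rw [inner_eq, Phi, Phi, norm_sq_eq, Finset.sum_div, ← Finset.sum_add_distrib,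
    ← Finset.sum_sub_distrib]
  apply Finset.sum_le_sum
  intro i _
  have := scalar_B hρ (lam i) (mu i) (c i)
  simpa [Gv] using this

lemma vec_Lip {ρ : ℝ} (hρ : 0 < ρ) (c lam mu : EuclideanSpace ℝ (Fin m)) :
    ‖Gv ρ c mu - Gv ρ c lam‖ ^ 2 ≤ ‖mu - lam‖ ^ 2 / ρ ^ 2 := by
  rw [norm_sq_eq, norm_sq_eq, Finset.sum_div]
  apply Finset.sum_le_sum
  intro i _
  have := scalar_Lip hρ (lam i) (mu i) (c i)
  simpa [Gv] using this

lemma Mv_nonneg {ρ : ℝ} (c lam : EuclideanSpace ℝ (Fin m)) (i : Fin m) :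
    0 ≤ Mv ρ c lam i := le_max_right _ _

lemma vec_star {ρ : ℝ} (hρ : 0 < ρ) (c lam w : EuclideanSpace ℝ (Fin m))
    (hw : ∀ i, 0 ≤ w i) :
    ⟪w, c⟫ - ‖w - lam‖ ^ 2 / (2 * ρ) ≤ Phi ρ c lam - ‖w - Mv ρ c lam‖ ^ 2 / (2 * ρ) := by
  rw [inner_eq, Phi, norm_sq_eq, norm_sq_eq, Finset.sum_div, Finset.sum_div,
    ← Finset.sum_sub_distrib, ← Finset.sum_sub_distrib]
  apply Finset.sum_le_sum
  intro i _
  have := scalar_star hρ (lam i) (c i) (w i) (hw i)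
  simpa [Mv] using this

lemma vec_eq {ρ : ℝ} (hρ : 0 < ρ) (c lam : EuclideanSpace ℝ (Fin m)) :
    ⟪Mv ρ c lam, c⟫ - ‖Mv ρ c lam - lam‖ ^ 2 / (2 * ρ) = Phi ρ c lam := by
  rw [inner_eq, Phi, norm_sq_eq, Finset.sum_div, ← Finset.sum_sub_distrib]
  apply Finset.sum_congr rfl
  intro i _
  have := scalar_eqq hρ (lam i) (c i)
  simpa [Mv] using this

lemma Gv_Mv {ρ : ℝ} (hρ : 0 < ρ) (c lam : EuclideanSpace ℝ (Fin m)) :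
    Gv ρ c lam = ρ⁻¹ • (Mv ρ c lam - lam) := by
  ext i
  simp [Gv, Mv, gr, div_eq_inv_mul]


end IDGB

open Asymptotics in

lemma hasGradientAt_of_quadratic {F : Type*} [NormedAddCommGroup F] [InnerProductSpace ℝ F]
    [CompleteSpace F] (φ : F → ℝ) (v x0 : F) (C : ℝ)
    (h : ∀ y, |φ y - φ x0 - ⟪v, y - x0⟫| ≤ C * ‖y - x0‖ ^ 2) :
    HasGradientAt φ v x0 := by
  rw [hasGradientAt_iff_hasFDerivAt, hasFDerivAt_iff_isLittleO_nhds_zero]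
  have hO : (fun h : F => φ (x0 + h) - φ x0 - (InnerProductSpace.toDual ℝ F v) h)
      =O[nhds 0] (fun h : F => ‖h‖ * ‖h‖) := by
    apply IsBigO.of_bound C
    filter_upwards with y
    have := h (x0 + y)
    simp only [add_sub_cancel_left] at this
    calc ‖φ (x0 + y) - φ x0 - (InnerProductSpace.toDual ℝ F v) y‖
        = |φ (x0 + y) - φ x0 - ⟪v, y⟫| := by
          simp [InnerProductSpace.toDual_apply_apply, Real.norm_eq_abs]
      _ ≤ C * ‖y‖ ^ 2 := this
      _ = C * ‖(fun h : F => ‖h‖ * ‖h‖) y‖ := by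
          simp [abs_of_nonneg, mul_self_nonneg, sq, abs_mul, abs_of_nonneg (norm_nonneg y)]
  have hlo : (fun h : F => ‖h‖ * ‖h‖) =o[nhds 0] (fun h : F => h) := by
    have h1 : (fun h : F => ‖h‖) =o[nhds (0:F)] (fun _ : F => (1:ℝ)) := by
      rw [isLittleO_one_iff]
      exact tendsto_norm_zero
    have := h1.mul_isBigO (isBigO_refl (fun h : F => ‖h‖) (nhds 0))
    rw [← isLittleO_norm_right]
    simpa using this
  exact hO.trans_isLittleO hlo


open IDGB Finset RealInnerProductSpace


lemma wbound {e a w : ℝ} (he : 0 ≤ e) (ha : 0 ≤ a) (hw : 0 ≤ w)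
    (h : w ^ 2 ≤ 2 * e + 2 * w * a + 2 * a ^ 2) :
    w ≤ 2 * Real.sqrt e + 3 * a := by
  set s := Real.sqrt e with hs
  have hs0 : 0 ≤ s := Real.sqrt_nonneg e
  have hs2 : s ^ 2 = e := Real.sq_sqrt he
  by_contra hcon
  push_neg at hcon
  nlinarith [sq_nonneg (w - a - s), sq_nonneg (w - 3*a - 2*s), mul_nonneg hs0 ha,
    mul_nonneg (mul_nonneg hs0 ha) hw, sq_nonneg (s - a), sq_nonneg (s + a)]


set_option maxHeartbeats 2000000 in


/-- If `x̃ ∈ X` minimizes the augmented Lagrangian `L_ρ(·, λ)` over `X` within accuracy `α`,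
then `‖∇_λ L_ρ(x̃, λ) − ∇_λ g_ρ(λ)‖² ≤ 2α/ρ`, where `g_ρ(λ) = inf_{x∈X} L_ρ(x, λ)`. -/
theorem inexact_dual_gradient_bound (n m : ℕ) (ρ : ℝ) (hρ : 0 < ρ)
    (X : Set (EuclideanSpace ℝ (Fin n))) (hXne : X.Nonempty) (hXcl : IsClosed X)
    (hXconv : Convex ℝ X)
    (f : EuclideanSpace ℝ (Fin n) → ℝ) (hfconv : ConvexOn ℝ Set.univ f)
    (hfcont : Continuous f)
    (A : EuclideanSpace ℝ (Fin n) →L[ℝ] EuclideanSpace ℝ (Fin m))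
    (b : EuclideanSpace ℝ (Fin m))
    (L : EuclideanSpace ℝ (Fin n) → EuclideanSpace ℝ (Fin m) → ℝ)
    (hL : ∀ x lam, L x lam = f x +
      ρ / 2 * (Metric.infDist (ρ⁻¹ • lam + (A x + b))
        {v : EuclideanSpace ℝ (Fin m) | ∀ i, v i ≤ 0}) ^ 2 - ‖lam‖ ^ 2 / (2 * ρ))
    (gρ : EuclideanSpace ℝ (Fin m) → ℝ)
    (hg : ∀ lam, IsGLB ((fun x => L x lam) '' X) (gρ lam))
    (xt : EuclideanSpace ℝ (Fin n)) (hxt : xt ∈ X)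
    (α : ℝ) (hα : 0 ≤ α) (lam : EuclideanSpace ℝ (Fin m))
    (hinexact : L xt lam ≤ gρ lam + α) :
    ‖gradient (fun l => L xt l) lam - gradient gρ lam‖ ^ 2 ≤ 2 * α / ρ := by
  classical
  -- reformulation of L
  have hL' : ∀ x mu, L x mu = f x + Phi ρ (A x + b) mu := by
    intro x mu
    rw [hL x mu, ← phi_repr hρ (A x + b) mu]
    ring
  -- lower bound
  have hlb : ∀ (mu : EuclideanSpace ℝ (Fin m)) y, y ∈ X → gρ mu ≤ L y mu := by
    intro mu y hy
    exact (hg mu).1 ⟨y, hy, rfl⟩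
  -- approximate minimizers
  have happrox : ∀ (mu : EuclideanSpace ℝ (Fin m)) (ε : ℝ), 0 < ε →
      ∃ y ∈ X, L y mu < gρ mu + ε := by
    intro mu ε hε
    by_contra hcon
    push_neg at hcon
    have hlbd : gρ mu + ε ∈ lowerBounds ((fun x => L x mu) '' X) := by
      rintro _ ⟨y, hy, rfl⟩
      exact hcon y hy
    have := (hg mu).2 hlbd
    linarith
  -- the quantitative two-point estimate
  have quant : ∀ x₁ ∈ X, ∀ x₂ ∈ X, ∀ α₁ α₂ θ : ℝ, 0 ≤ α₁ → 0 ≤ α₂ → 0 < θ → θ < 1 →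
      L x₁ lam ≤ gρ lam + α₁ → L x₂ lam ≤ gρ lam + α₂ →
      ‖Gv ρ (A x₁ + b) lam - Gv ρ (A x₂ + b) lam‖ ^ 2
        ≤ 2 / ρ * (α₁ / (1 - θ) + α₂ / θ) := by
    intro x₁ hx₁ x₂ hx₂ α₁ α₂ θ hα₁ hα₂ hθ0 hθ1 hb1 hb2
    set c₁ := A x₁ + b with hc₁
    set c₂ := A x₂ + b with hc₂
    set xθ := θ • x₁ + (1 - θ) • x₂ with hxθdef
    have hxθ : xθ ∈ X := hXconv hx₁ hx₂ hθ0.le (by linarith) (by ring)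
    have hcθ : A xθ + b = θ • c₁ + (1 - θ) • c₂ := by
      rw [hxθdef, hc₁, hc₂, map_add, map_smul, map_smul]
      module
    have hfθ : f xθ ≤ θ * f x₁ + (1 - θ) * f x₂ :=
      hfconv.2 (Set.mem_univ x₁) (Set.mem_univ x₂) hθ0.le (by linarith) (by ring)
    set ν := Mv ρ (A xθ + b) lam with hν
    set M₁ := Mv ρ c₁ lam with hM₁
    set M₂ := Mv ρ c₂ lam with hM₂
    set S := ‖ν - M₁‖ with hS
    set T := ‖ν - M₂‖ with hT
    -- value of L xθ lam via its own maximizer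
    have hval : L xθ lam = f xθ + (⟪ν, A xθ + b⟫ - ‖ν - lam‖ ^ 2 / (2 * ρ)) := by
      rw [hL' xθ lam, vec_eq hρ (A xθ + b) lam]
    have hsplit : ⟪ν, A xθ + b⟫ = θ * ⟪ν, c₁⟫ + (1 - θ) * ⟪ν, c₂⟫ := by
      rw [hcθ, inner_add_right, real_inner_smul_right, real_inner_smul_right]
    have hstar₁ : ⟪ν, c₁⟫ - ‖ν - lam‖ ^ 2 / (2 * ρ)
        ≤ Phi ρ c₁ lam - S ^ 2 / (2 * ρ) :=
      vec_star hρ c₁ lam ν (Mv_nonneg _ _)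
    have hstar₂ : ⟪ν, c₂⟫ - ‖ν - lam‖ ^ 2 / (2 * ρ)
        ≤ Phi ρ c₂ lam - T ^ 2 / (2 * ρ) :=
      vec_star hρ c₂ lam ν (Mv_nonneg _ _)
    have hLθ_ub : L xθ lam ≤ θ * (L x₁ lam - S ^ 2 / (2 * ρ))
        + (1 - θ) * (L x₂ lam - T ^ 2 / (2 * ρ)) := by
      have e1 : θ * (⟪ν, c₁⟫ - ‖ν - lam‖ ^ 2 / (2 * ρ))
          ≤ θ * (Phi ρ c₁ lam - S ^ 2 / (2 * ρ)) :=
        mul_le_mul_of_nonneg_left hstar₁ hθ0.le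
      have e2 : (1 - θ) * (⟪ν, c₂⟫ - ‖ν - lam‖ ^ 2 / (2 * ρ))
          ≤ (1 - θ) * (Phi ρ c₂ lam - T ^ 2 / (2 * ρ)) :=
        mul_le_mul_of_nonneg_left hstar₂ (by linarith)
      have hL1 : L x₁ lam = f x₁ + Phi ρ c₁ lam := hL' x₁ lam
      have hL2 : L x₂ lam = f x₂ + Phi ρ c₂ lam := hL' x₂ lam
      rw [hval, hsplit]
      nlinarith [e1, e2, hfθ]
    have hLθ_lb : θ * (L x₁ lam - α₁) + (1 - θ) * (L x₂ lam - α₂) ≤ L xθ lam := by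
      have e1 : θ * (L x₁ lam - α₁) ≤ θ * gρ lam :=
        mul_le_mul_of_nonneg_left (by linarith) hθ0.le
      have e2 : (1 - θ) * (L x₂ lam - α₂) ≤ (1 - θ) * gρ lam :=
        mul_le_mul_of_nonneg_left (by linarith) (by linarith)
      have := hlb lam xθ hxθ
      nlinarith [e1, e2]
    have hq : θ * S ^ 2 + (1 - θ) * T ^ 2 ≤ 2 * ρ * (θ * α₁ + (1 - θ) * α₂) := by
      have h2ρ : (0:ℝ) < 2 * ρ := by linarith
      have expand : θ * (L x₁ lam - S ^ 2 / (2 * ρ)) + (1 - θ) * (L x₂ lam - T ^ 2 / (2 * ρ))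
          - (θ * (L x₁ lam - α₁) + (1 - θ) * (L x₂ lam - α₂))
          = θ * α₁ + (1 - θ) * α₂ - (θ * S ^ 2 + (1 - θ) * T ^ 2) / (2 * ρ) := by
        field_simp
        ring
      have hcomb : 0 ≤ θ * α₁ + (1 - θ) * α₂ - (θ * S ^ 2 + (1 - θ) * T ^ 2) / (2 * ρ) := by
        rw [← expand]
        linarith [hLθ_ub, hLθ_lb]
      rw [sub_nonneg, div_le_iff₀ h2ρ] at hcomb
      linarith [hcomb]
    -- from the weighted bound to the distance bound
    have htri : ‖M₁ - M₂‖ ≤ S + T := by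
      have : M₁ - M₂ = -(ν - M₁) + (ν - M₂) := by abel
      rw [this]
      calc ‖-(ν - M₁) + (ν - M₂)‖ ≤ ‖-(ν - M₁)‖ + ‖ν - M₂‖ := norm_add_le _ _
        _ = S + T := by rw [norm_neg]
    have hGM : Gv ρ c₁ lam - Gv ρ c₂ lam = ρ⁻¹ • (M₁ - M₂) := by
      rw [Gv_Mv hρ c₁ lam, Gv_Mv hρ c₂ lam, hM₁, hM₂, ← smul_sub]
      congr 1
      abel
    have hGnorm : ‖Gv ρ c₁ lam - Gv ρ c₂ lam‖ ^ 2 = ‖M₁ - M₂‖ ^ 2 / ρ ^ 2 := by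
      rw [hGM, norm_smul, mul_pow, Real.norm_eq_abs, abs_of_pos (by positivity : (0:ℝ) < ρ⁻¹)]
      field_simp
    have hST : (S + T) ^ 2 ≤ 2 * ρ * (θ * α₁ + (1 - θ) * α₂) / (θ * (1 - θ)) := by
      rw [le_div_iff₀ (by nlinarith : (0:ℝ) < θ * (1 - θ))]
      nlinarith [sq_nonneg ((1 - θ) * T - θ * S), hq]
    have hMST : ‖M₁ - M₂‖ ^ 2 ≤ (S + T) ^ 2 :=
      pow_le_pow_left₀ (norm_nonneg _) htri 2
    rw [hGnorm]
    calc ‖M₁ - M₂‖ ^ 2 / ρ ^ 2 ≤ (2 * ρ * (θ * α₁ + (1 - θ) * α₂) / (θ * (1 - θ))) / ρ ^ 2 := by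
          gcongr
          exact le_trans hMST hST
      _ = 2 / ρ * (α₁ / (1 - θ) + α₂ / θ) := by
          have h1 : θ ≠ 0 := ne_of_gt hθ0
          have h2 : (1:ℝ) - θ ≠ 0 := by linarith
          have h3 : ρ ≠ 0 := ne_of_gt hρ
          field_simp

  -- minimizing sequence
  have hex : ∀ k : ℕ, ∃ y ∈ X, L y lam < gρ lam + 1/((k:ℝ)+1) :=
    fun k => happrox lam (1/((k:ℝ)+1)) (by positivity)
  choose xk hxkX hxk using hex
  set Gk : ℕ → EuclideanSpace ℝ (Fin m) := fun k => Gv ρ (A (xk k) + b) lam with hGkdef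
  have h12 : ((1:ℝ)/2) ∈ Set.Ioo (0:ℝ) 1 := by norm_num
  have hquantk : ∀ j k : ℕ, ‖Gk j - Gk k‖ ^ 2
      ≤ 2 / ρ * (2 * (1/((j:ℝ)+1)) + 2 * (1/((k:ℝ)+1))) := by
    intro j k
    have := quant (xk j) (hxkX j) (xk k) (hxkX k) (1/((j:ℝ)+1)) (1/((k:ℝ)+1)) (1/2)
      (by positivity) (by positivity) (by norm_num) (by norm_num) (hxk j).le (hxk k).le
    have heq2 : (1/((j:ℝ)+1)) / (1 - 1/2) + (1/((k:ℝ)+1)) / (1/2)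
        = 2 * (1/((j:ℝ)+1)) + 2 * (1/((k:ℝ)+1)) := by norm_num; ring
    rw [heq2] at this
    exact this
  have hcauchy : CauchySeq Gk := by
    apply cauchySeq_of_le_tendsto_0 (fun N : ℕ => Real.sqrt (8 / ρ * (1/((N:ℝ)+1))))
    · intro j k N hj hk
      rw [dist_eq_norm]
      have hsq : ‖Gk j - Gk k‖ ^ 2 ≤ 8 / ρ * (1/((N:ℝ)+1)) := by
        have h1 : 1/((j:ℝ)+1) ≤ 1/((N:ℝ)+1) := by
          gcongr <;> exact_mod_cast hj
        have h2 : 1/((k:ℝ)+1) ≤ 1/((N:ℝ)+1) := by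
          gcongr <;> exact_mod_cast hk
        have h3 := hquantk j k
        have h4 : 2 / ρ * (2 * (1/((j:ℝ)+1)) + 2 * (1/((k:ℝ)+1)))
            ≤ 2 / ρ * (2 * (1/((N:ℝ)+1)) + 2 * (1/((N:ℝ)+1))) := by
          gcongr
        calc ‖Gk j - Gk k‖ ^ 2 ≤ 2 / ρ * (2 * (1/((N:ℝ)+1)) + 2 * (1/((N:ℝ)+1))) :=
              le_trans h3 h4
          _ = 8 / ρ * (1/((N:ℝ)+1)) := by ring
      calc ‖Gk j - Gk k‖ = Real.sqrt (‖Gk j - Gk k‖ ^ 2) :=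
            (Real.sqrt_sq (norm_nonneg _)).symm
        _ ≤ Real.sqrt (8 / ρ * (1/((N:ℝ)+1))) := Real.sqrt_le_sqrt hsq
    · have h0 : Filter.Tendsto (fun N : ℕ => 8 / ρ * (1/((N:ℝ)+1))) Filter.atTop (nhds 0) := by
        have := tendsto_one_div_add_atTop_nhds_zero_nat.const_mul (8 / ρ)
        simpa using this
      have := (Real.continuous_sqrt.tendsto 0).comp h0
      simpa [Function.comp_def] using this
  obtain ⟨v, hv⟩ := cauchySeq_tendsto_of_complete hcauchy
  -- the gap bound
  have gapBound : ∀ y ∈ X, ‖Gv ρ (A y + b) lam - v‖ ^ 2 ≤ 2 * (L y lam - gρ lam) / ρ := by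
    intro y hy
    have hgap0 : 0 ≤ L y lam - gρ lam := by linarith [hlb lam y hy]
    have step : ∀ θ : ℝ, 0 < θ → θ < 1 →
        ‖Gv ρ (A y + b) lam - v‖ ^ 2 ≤ 2 / ρ * ((L y lam - gρ lam) / (1 - θ)) := by
      intro θ h0 h1
      have hk : ∀ k : ℕ, ‖Gv ρ (A y + b) lam - Gk k‖ ^ 2
          ≤ 2 / ρ * ((L y lam - gρ lam) / (1 - θ) + (1/((k:ℝ)+1)) / θ) := by
        intro k
        exact quant y hy (xk k) (hxkX k) (L y lam - gρ lam) (1/((k:ℝ)+1)) θ hgap0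
          (by positivity) h0 h1 (by linarith) (hxk k).le
      have hT1 : Filter.Tendsto (fun k : ℕ => ‖Gv ρ (A y + b) lam - Gk k‖ ^ 2) Filter.atTop
          (nhds (‖Gv ρ (A y + b) lam - v‖ ^ 2)) :=
        ((tendsto_const_nhds.sub hv).norm.pow 2)
      have hT2 : Filter.Tendsto
          (fun k : ℕ => 2 / ρ * ((L y lam - gρ lam) / (1 - θ) + (1/((k:ℝ)+1)) / θ))
          Filter.atTop (nhds (2 / ρ * ((L y lam - gρ lam) / (1 - θ) + 0 / θ))) := by
        apply Filter.Tendsto.const_mul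
        exact Filter.Tendsto.add tendsto_const_nhds
          (tendsto_one_div_add_atTop_nhds_zero_nat.div_const θ)
      simp only [zero_div, add_zero] at hT2
      exact le_of_tendsto_of_tendsto' hT1 hT2 hk
    have hseq : ∀ j : ℕ, ‖Gv ρ (A y + b) lam - v‖ ^ 2
        ≤ 2 / ρ * ((L y lam - gρ lam) / (1 - 1/((j:ℝ)+2))) := by
      intro j
      apply step
      · positivity
      · rw [div_lt_one (by positivity)]
        have : (0:ℝ) ≤ (j:ℝ) := Nat.cast_nonneg j
        linarith
    have hj2 : Filter.Tendsto (fun j : ℕ => 1/((j:ℝ)+2)) Filter.atTop (nhds 0) := by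
      have h1 : Filter.Tendsto (fun j : ℕ => ((j:ℝ)+2)) Filter.atTop Filter.atTop :=
        Filter.tendsto_atTop_add_const_right _ 2 tendsto_natCast_atTop_atTop
      simpa [one_div, Pi.inv_def] using h1.inv_tendsto_atTop
    have hT3 : Filter.Tendsto
        (fun j : ℕ => 2 / ρ * ((L y lam - gρ lam) / (1 - 1/((j:ℝ)+2)))) Filter.atTop
        (nhds (2 / ρ * ((L y lam - gρ lam) / (1 - 0)))) := by
      apply Filter.Tendsto.const_mul
      apply Filter.Tendsto.div tendsto_const_nhds
      · exact tendsto_const_nhds.sub hj2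
      · norm_num
    have hfin := ge_of_tendsto hT3 (Filter.Eventually.of_forall hseq)
    calc ‖Gv ρ (A y + b) lam - v‖ ^ 2 ≤ 2 / ρ * ((L y lam - gρ lam) / (1 - 0)) := hfin
      _ = 2 * (L y lam - gρ lam) / ρ := by ring
  -- gradient of L xt in the second variable
  have hgradL : HasGradientAt (fun l => L xt l) (Gv ρ (A xt + b) lam) lam := by
    apply hasGradientAt_of_quadratic _ _ _ (1 / (2 * ρ))
    intro y
    have hA := vec_A hρ (A xt + b) lam y
    have hB := vec_B hρ (A xt + b) lam y
    have heq : 1 / (2 * ρ) * ‖y - lam‖ ^ 2 = ‖y - lam‖ ^ 2 / (2 * ρ) := by ring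
    rw [abs_le, hL' xt y, hL' xt lam, heq]
    constructor
    · linarith
    · linarith
  -- upper linear bound for gρ
  have hupper : ∀ mu, gρ mu ≤ gρ lam + ⟪v, mu - lam⟫ := by
    intro mu
    have hk : ∀ k : ℕ, gρ mu ≤ gρ lam + 1/((k:ℝ)+1) + ⟪Gk k, mu - lam⟫ := by
      intro k
      have h1 : gρ mu ≤ L (xk k) mu := hlb mu (xk k) (hxkX k)
      have h2 : L (xk k) mu ≤ L (xk k) lam + ⟪Gk k, mu - lam⟫ := by
        rw [hL' _ mu, hL' _ lam]
        linarith [vec_A hρ (A (xk k) + b) lam mu]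
      have h3 := (hxk k).le
      linarith
    have ht : Filter.Tendsto (fun k : ℕ => gρ lam + 1/((k:ℝ)+1) + ⟪Gk k, mu - lam⟫)
        Filter.atTop (nhds (gρ lam + 0 + ⟪v, mu - lam⟫)) := by
      exact Filter.Tendsto.add
        (Filter.Tendsto.add tendsto_const_nhds tendsto_one_div_add_atTop_nhds_zero_nat)
        (hv.inner tendsto_const_nhds)
    have := ge_of_tendsto ht (Filter.Eventually.of_forall hk)
    simpa using this
  -- lower quadratic bound for gρ
  have hlower : ∀ mu, gρ lam + ⟪v, mu - lam⟫ - 4 / ρ * ‖mu - lam‖ ^ 2 ≤ gρ mu := by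
    intro mu
    set r := ‖mu - lam‖ with hrdef
    have hr0 : 0 ≤ r := norm_nonneg _
    have hj : ∀ j : ℕ, gρ lam + ⟪v, mu - lam⟫
        - (2 * Real.sqrt ((1/((j:ℝ)+1)) / ρ) + 3 * (r / ρ)) * r - r ^ 2 / (2 * ρ)
        - 1/((j:ℝ)+1) ≤ gρ mu := by
      intro j
      set ε := 1/((j:ℝ)+1) with hεdef
      have hε0 : (0:ℝ) < ε := by positivity
      obtain ⟨y, hy, hly⟩ := happrox mu ε hε0
      set Gy := Gv ρ (A y + b) lam with hGydef
      set Gym := Gv ρ (A y + b) mu with hGymdef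
      set w := ‖Gy - v‖ with hwdef
      have hw0 : 0 ≤ w := norm_nonneg _
      have hgapy : 0 ≤ L y lam - gρ lam := by linarith [hlb lam y hy]
      -- Lipschitz bound
      have hLipsq := vec_Lip hρ (A y + b) lam mu
      have hLip : ‖Gym - Gy‖ ≤ r / ρ := by
        apply le_of_pow_le_pow_left₀ (two_ne_zero) (by positivity)
        calc ‖Gym - Gy‖ ^ 2 ≤ ‖mu - lam‖ ^ 2 / ρ ^ 2 := hLipsq
          _ = (r / ρ) ^ 2 := by rw [div_pow]
      -- bound on the gap of y at lam
      have h4 : L y lam ≤ L y mu + ⟪Gym, lam - mu⟫ := by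
        rw [hL' y lam, hL' y mu]
        linarith [vec_A hρ (A y + b) mu lam]
      have hvg : ⟪v, mu - lam⟫ + ⟪Gym, lam - mu⟫ = ⟪v - Gym, mu - lam⟫ := by
        rw [inner_sub_left]
        have : lam - mu = -(mu - lam) := by abel
        rw [this, inner_neg_right]
        ring
      have hnv : ‖v - Gym‖ ≤ w + r / ρ := by
        calc ‖v - Gym‖ = ‖(v - Gy) + (Gy - Gym)‖ := by congr 1; abel
          _ ≤ ‖v - Gy‖ + ‖Gy - Gym‖ := norm_add_le _ _
          _ = w + ‖Gym - Gy‖ := by rw [norm_sub_rev v Gy, norm_sub_rev Gy Gym]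
          _ ≤ w + r / ρ := by linarith
      have hCS : ⟪v - Gym, mu - lam⟫ ≤ ‖v - Gym‖ * r := real_inner_le_norm _ _
      have hgap : L y lam - gρ lam ≤ ε + (w + r / ρ) * r := by
        have h5 : gρ mu ≤ gρ lam + ⟪v, mu - lam⟫ := hupper mu
        have h6 : ‖v - Gym‖ * r ≤ (w + r / ρ) * r := mul_le_mul_of_nonneg_right hnv hr0
        have h7 : L y mu ≤ gρ mu + ε := hly.le
        linarith [hCS, hvg.ge, hvg.le]
      -- bound w
      have hwsq : w ^ 2 ≤ 2 * (L y lam - gρ lam) / ρ := gapBound y hy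
      have hwsq2 : w ^ 2 ≤ 2 * (ε / ρ) + 2 * w * (r / ρ) + 2 * (r / ρ) ^ 2 := by
        have h8 : 2 * (L y lam - gρ lam) / ρ ≤ 2 * (ε + (w + r / ρ) * r) / ρ := by
          gcongr
        have h9 : 2 * (ε + (w + r / ρ) * r) / ρ
            = 2 * (ε / ρ) + 2 * w * (r / ρ) + 2 * r ^ 2 / ρ ^ 2 := by
          field_simp
          ring
        have h10 : 2 * (r / ρ) ^ 2 = 2 * r ^ 2 / ρ ^ 2 := by rw [div_pow]; ring
        linarith
      have hwle : w ≤ 2 * Real.sqrt (ε / ρ) + 3 * (r / ρ) :=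
        wbound (by positivity) (by positivity) hw0 hwsq2
      -- final chain
      have hBy := vec_B hρ (A y + b) lam mu
      have h11 : L y lam + ⟪Gy, mu - lam⟫ - r ^ 2 / (2 * ρ) ≤ L y mu := by
        rw [hL' y lam, hL' y mu]
        linarith
      have h12' : ⟪v, mu - lam⟫ - w * r ≤ ⟪Gy, mu - lam⟫ := by
        have hx1 : ⟪v - Gy, mu - lam⟫ ≤ ‖v - Gy‖ * r := real_inner_le_norm _ _
        have hx2 : ‖v - Gy‖ = w := by rw [hwdef, norm_sub_rev]
        have hx3 : ⟪v - Gy, mu - lam⟫ = ⟪v, mu - lam⟫ - ⟪Gy, mu - lam⟫ := inner_sub_left _ _ _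
        rw [hx2] at hx1
        linarith
      have h13 : w * r ≤ (2 * Real.sqrt (ε / ρ) + 3 * (r / ρ)) * r :=
        mul_le_mul_of_nonneg_right hwle hr0
      have h14 : L y mu ≤ gρ mu + ε := hly.le
      linarith
    -- pass to the limit in j
    have htε : Filter.Tendsto (fun j : ℕ => 1/((j:ℝ)+1)) Filter.atTop (nhds 0) :=
      tendsto_one_div_add_atTop_nhds_zero_nat
    have hts : Filter.Tendsto (fun j : ℕ => Real.sqrt ((1/((j:ℝ)+1)) / ρ)) Filter.atTop
        (nhds 0) := by
      have h0 : Filter.Tendsto (fun j : ℕ => (1/((j:ℝ)+1)) / ρ) Filter.atTop (nhds 0) := by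
        simpa using htε.div_const ρ
      have := (Real.continuous_sqrt.tendsto 0).comp h0
      simpa [Function.comp_def] using this
    have hT : Filter.Tendsto (fun j : ℕ => gρ lam + ⟪v, mu - lam⟫
        - (2 * Real.sqrt ((1/((j:ℝ)+1)) / ρ) + 3 * (r / ρ)) * r - r ^ 2 / (2 * ρ)
        - 1/((j:ℝ)+1)) Filter.atTop
        (nhds (gρ lam + ⟪v, mu - lam⟫ - (2 * 0 + 3 * (r / ρ)) * r - r ^ 2 / (2 * ρ) - 0)) := by
      apply Filter.Tendsto.sub
      apply Filter.Tendsto.sub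
      apply Filter.Tendsto.sub tendsto_const_nhds
      · exact (((hts.const_mul 2).add tendsto_const_nhds).mul_const r)
      · exact tendsto_const_nhds
      · exact htε
    have hlim := le_of_tendsto hT (Filter.Eventually.of_forall hj)
    have hfinal : gρ lam + ⟪v, mu - lam⟫ - (2 * 0 + 3 * (r / ρ)) * r - r ^ 2 / (2 * ρ) - 0
        = gρ lam + ⟪v, mu - lam⟫ - 3 * r ^ 2 / ρ - r ^ 2 / (2 * ρ) := by ring
    have hcmp : 4 / ρ * r ^ 2 ≥ 3 * r ^ 2 / ρ + r ^ 2 / (2 * ρ) := by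
      have hd : 4 / ρ * r ^ 2 - (3 * r ^ 2 / ρ + r ^ 2 / (2 * ρ)) = r ^ 2 / (2 * ρ) := by
        field_simp
        ring
      have hnn : 0 ≤ r ^ 2 / (2 * ρ) := by positivity
      linarith
    linarith [hlim, hfinal.le, hfinal.ge]
  -- gradient of gρ
  have hgradg : HasGradientAt gρ v lam := by
    apply hasGradientAt_of_quadratic _ _ _ (4 / ρ)
    intro y
    rw [abs_le]
    constructor
    · linarith [hlower y]
    · have h1 := hupper y
      have h2 : 0 ≤ 4 / ρ * ‖y - lam‖ ^ 2 := by positivity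
      linarith
  -- conclusion
  rw [hgradL.gradient, hgradg.gradient]
  calc ‖Gv ρ (A xt + b) lam - v‖ ^ 2 ≤ 2 * (L xt lam - gρ lam) / ρ := gapBound xt hxt
    _ ≤ 2 * α / ρ := by
      gcongr
      linarith
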